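/- Let m ≥ 1 and N = 2m. For x ∈ ℝ^N, define w ∈ ℝ^N by w_n = x_{2n} and w_{N−1−n} = −x_{2n+1} for 0 ≤ n < m (the even–odd separation with the odd indices reversed and negated). Then for every 0 ≤ k < N, the DST coefficient satisfies Σ_{n=0}^{N−1} x_n · sin(π·(n+1/2)·(k+1)/N) = Re( i · exp(−iπ(k+1)/(2N)) · Σ_{n=0}^{N−1} w_n · exp(−2πi·n·(k+1)/N) ). -/
import Mathlib

open Finset Complex Real

private lemma sum_range_two_mul' {M : Type*} [AddCommMonoid M] (f : ℕ → M) (m : ℕ) :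
    ∑ n ∈ Finset.range (2 * m), f n = ∑ j ∈ Finset.range m, (f (2 * j) + f (2 * j + 1)) := by
  induction m with
  | zero => simp
  | succ m ih =>
      have h : 2 * (m + 1) = (2 * m + 1) + 1 := by ring
      rw [h, Finset.sum_range_succ, Finset.sum_range_succ, ih, Finset.sum_range_succ]
      abel

private lemma sum_range_split_reflect {M : Type*} [AddCommMonoid M] (f : ℕ → M) (m : ℕ) :
    ∑ n ∈ Finset.range (2 * m), f n =
      ∑ j ∈ Finset.range m, f j + ∑ j ∈ Finset.range m, f (2 * m - 1 - j) := by
  have h1 : ∑ j ∈ Finset.range m, f (2 * m - 1 - j) = ∑ j ∈ Finset.range m, f (m + j) := by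
    rw [← Finset.sum_range_reflect (fun j => f (m + j)) m]
    refine Finset.sum_congr rfl fun j hj => ?_
    have hj' := Finset.mem_range.mp hj
    congr 1
    omega
  rw [h1, two_mul, Finset.sum_range_add]

private lemma re_I_mul_exp (r : ℝ) :
    (Complex.I * Complex.exp (↑r * Complex.I)).re = -Real.sin r := by
  simp [Complex.mul_re, Complex.exp_ofReal_mul_I_re, Complex.exp_ofReal_mul_I_im]

/-- **The DST as the real part of a rescaled DFT of a permuted, partially negated vector.**
Let `N = 2m` and let `w` be obtained from `x ∈ ℝ^N` by even–odd separation with the odd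
indices reversed and negated: `w_n = x_{2n}` and `w_{N−1−n} = −x_{2n+1}` for `0 ≤ n < m`.
Then for every `0 ≤ k < N`,
`Σ_n x_n sin(π(n+1/2)(k+1)/N) = Re( i·exp(−iπ(k+1)/(2N)) · Σ_n w_n exp(−2πi·n·(k+1)/N) )`. -/
theorem dst_eq_re_scaled_dft (m : ℕ) (hm : 1 ≤ m) (N : ℕ) (hN : N = 2 * m)
    (x w : Fin N → ℝ)
    (hw : ∀ n : Fin m,
      w ⟨(n : ℕ), by have := n.isLt; omega⟩ = x ⟨2 * (n : ℕ), by have := n.isLt; omega⟩ ∧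
      w ⟨N - 1 - (n : ℕ), by have := n.isLt; omega⟩ =
        -x ⟨2 * (n : ℕ) + 1, by have := n.isLt; omega⟩)
    (k : ℕ) (hk : k < N) :
    ∑ n : Fin N, x n * Real.sin (Real.pi * ((n : ℕ) + 1 / 2) * (k + 1) / N) =
      (Complex.I * Complex.exp (-Complex.I * Real.pi * (k + 1) / (2 * N)) *
        ∑ n : Fin N, (w n : ℂ) *
          Complex.exp (-2 * Real.pi * Complex.I * (n : ℕ) * (k + 1) / N)).re := by
  subst hN
  have hN0 : (2 * m : ℕ) ≠ 0 := by omega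
  have hNc : ((2 * m : ℕ) : ℂ) ≠ 0 := Nat.cast_ne_zero.mpr hN0
  have hNr : ((2 * m : ℕ) : ℝ) ≠ 0 := Nat.cast_ne_zero.mpr hN0
  have hmc : (m : ℂ) ≠ 0 := Nat.cast_ne_zero.mpr (by omega)
  -- extend x, w to ℕ
  set X : ℕ → ℝ := fun n => if h : n < 2 * m then x ⟨n, h⟩ else 0 with hX
  set W : ℕ → ℝ := fun n => if h : n < 2 * m then w ⟨n, h⟩ else 0 with hW
  set c : ℂ := Complex.exp (-Complex.I * Real.pi * (k + 1) / (2 * (2 * m : ℕ))) with hc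
  -- rewrite LHS as a range sum
  have hL : ∑ n : Fin (2 * m), x n * Real.sin (Real.pi * ((n : ℕ) + 1 / 2) * (k + 1) / (2 * m : ℕ)) =
      ∑ n ∈ Finset.range (2 * m), X n * Real.sin (Real.pi * (n + 1 / 2) * (k + 1) / (2 * m : ℕ)) := by
    rw [← Fin.sum_univ_eq_sum_range
      (fun n : ℕ => X n * Real.sin (Real.pi * (n + 1 / 2) * (k + 1) / (2 * m : ℕ)))]
    refine Finset.sum_congr rfl fun n _ => ?_
    simp [hX, n.isLt]
  have hR : ∑ n : Fin (2 * m), ((w n : ℝ) : ℂ) *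
        Complex.exp (-2 * Real.pi * Complex.I * (n : ℕ) * (k + 1) / (2 * m : ℕ)) =
      ∑ n ∈ Finset.range (2 * m), (W n : ℂ) *
        Complex.exp (-2 * Real.pi * Complex.I * n * (k + 1) / (2 * m : ℕ)) := by
    rw [← Fin.sum_univ_eq_sum_range
      (fun n : ℕ => (W n : ℂ) * Complex.exp (-2 * Real.pi * Complex.I * n * (k + 1) / (2 * m : ℕ)))]
    refine Finset.sum_congr rfl fun n _ => ?_
    simp [hW, n.isLt]
  rw [hL, hR]
  -- split RHS sum into first half and reflected second half
  rw [sum_range_split_reflect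
    (fun n => (W n : ℂ) * Complex.exp (-2 * Real.pi * Complex.I * n * (k + 1) / (2 * m : ℕ))) m]
  rw [mul_add, Finset.mul_sum, Finset.mul_sum, ← Finset.sum_add_distrib, Complex.re_sum]
  -- split LHS sum into even/odd
  rw [sum_range_two_mul' (fun n => X n * Real.sin (Real.pi * (n + 1 / 2) * (k + 1) / (2 * m : ℕ))) m]
  refine Finset.sum_congr rfl fun j hj => ?_
  have hjm : j < m := Finset.mem_range.mp hj
  -- values of W
  have hwj := hw ⟨j, hjm⟩
  have hW1 : W j = X (2 * j) := by
    simp only [hX, hW]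
    rw [dif_pos (by omega : j < 2 * m), dif_pos (by omega : 2 * j < 2 * m)]
    exact hwj.1
  have hW2 : W (2 * m - 1 - j) = -X (2 * j + 1) := by
    simp only [hX, hW]
    rw [dif_pos (by omega : 2 * m - 1 - j < 2 * m), dif_pos (by omega : 2 * j + 1 < 2 * m)]
    exact hwj.2
  rw [hW1, hW2]
  -- the two complex factors as single exponentials
  have hcast : ((2 * m - 1 - j : ℕ) : ℂ) = (2 * m : ℕ) - (j + 1) := by
    have : (2 * m - 1 - j : ℕ) = 2 * m - (j + 1) := by omega
    rw [this, Nat.cast_sub (by omega : j + 1 ≤ 2 * m)]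
    push_cast
    ring
  have hE1 : c * Complex.exp (-2 * Real.pi * Complex.I * (j : ℕ) * (k + 1) / (2 * m : ℕ)) =
      Complex.exp (↑(-(Real.pi * (2 * (j : ℝ) + 1 / 2) * (k + 1) / (2 * m : ℕ))) * Complex.I) := by
    rw [hc, ← Complex.exp_add]
    congr 1
    push_cast
    field_simp [hmc]
    ring
  have hE2 : c * Complex.exp (-2 * Real.pi * Complex.I * ((2 * m - 1 - j : ℕ) : ℂ) * (k + 1) / (2 * m : ℕ)) =
      Complex.exp (↑(Real.pi * (2 * (j : ℝ) + 1 + 1 / 2) * (k + 1) / (2 * m : ℕ)) * Complex.I) := by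
    rw [hc, ← Complex.exp_add]
    have : (-Complex.I * Real.pi * (k + 1) / (2 * (2 * m : ℕ)) +
        -2 * Real.pi * Complex.I * ((2 * m - 1 - j : ℕ) : ℂ) * (k + 1) / (2 * m : ℕ)) =
        ↑(Real.pi * (2 * (j : ℝ) + 1 + 1 / 2) * (k + 1) / (2 * m : ℕ)) * Complex.I +
          (-(k + 1) : ℤ) * (2 * Real.pi * Complex.I) := by
      rw [hcast]
      push_cast
      field_simp [hmc]
      ring
    rw [this, Complex.exp_add, Complex.exp_int_mul_two_pi_mul_I, mul_one]
  -- finish termwise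
  have ht1 : (Complex.I * c * ((X (2 * j) : ℂ) *
      Complex.exp (-2 * Real.pi * Complex.I * (j : ℕ) * (k + 1) / (2 * m : ℕ)))).re =
      X (2 * j) * Real.sin (Real.pi * (2 * (j : ℝ) + 1 / 2) * (k + 1) / (2 * m : ℕ)) := by
    have : Complex.I * c * ((X (2 * j) : ℂ) *
        Complex.exp (-2 * Real.pi * Complex.I * (j : ℕ) * (k + 1) / (2 * m : ℕ))) =
        (X (2 * j) : ℂ) * (Complex.I *
          Complex.exp (↑(-(Real.pi * (2 * (j : ℝ) + 1 / 2) * (k + 1) / (2 * m : ℕ))) * Complex.I)) := by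
      rw [← hE1]; ring
    rw [this]
    rw [Complex.re_ofReal_mul, re_I_mul_exp, Real.sin_neg]
    ring
  have ht2 : (Complex.I * c * ((-X (2 * j + 1) : ℝ) *
      Complex.exp (-2 * Real.pi * Complex.I * ((2 * m - 1 - j : ℕ) : ℂ) * (k + 1) / (2 * m : ℕ)))).re =
      X (2 * j + 1) * Real.sin (Real.pi * (2 * (j : ℝ) + 1 + 1 / 2) * (k + 1) / (2 * m : ℕ)) := by
    have : Complex.I * c * ((-X (2 * j + 1) : ℝ) *
        Complex.exp (-2 * Real.pi * Complex.I * ((2 * m - 1 - j : ℕ) : ℂ) * (k + 1) / (2 * m : ℕ))) =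
        ((-X (2 * j + 1) : ℝ) : ℂ) * (Complex.I *
          Complex.exp (↑(Real.pi * (2 * (j : ℝ) + 1 + 1 / 2) * (k + 1) / (2 * m : ℕ)) * Complex.I)) := by
      rw [← hE2]; ring
    rw [this, Complex.re_ofReal_mul, re_I_mul_exp]
    ring
  have harg1 : Real.pi * ((2 * j : ℕ) + 1 / 2) * (k + 1) / (2 * m : ℕ) =
      Real.pi * (2 * (j : ℝ) + 1 / 2) * (k + 1) / (2 * m : ℕ) := by push_cast; ring
  have harg2 : Real.pi * ((2 * j + 1 : ℕ) + 1 / 2) * (k + 1) / (2 * m : ℕ) =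
      Real.pi * (2 * (j : ℝ) + 1 + 1 / 2) * (k + 1) / (2 * m : ℕ) := by push_cast; ring
  rw [Complex.add_re, harg1, harg2, ht1, ht2]
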